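/- For every m ≥ 0: A_m occurs exactly twice in the word A_m A_m, namely at positions 1 and 2^m + 1 (as prefix and suffix); and A_m occurs exactly twice in the word A_m B_m A_m, namely at positions 1 and 2^{m+1} + 1 (as prefix and suffix). -/

import Mathlib

/-- The alphabet: letters a, b (for the period-doubling sequence) and c (used by Θ₂). -/
inductive Letter : Type
  | a | b | c
deriving DecidableEq, Repr

open Letter

/-- The period-doubling substitution σ : a ↦ ab, b ↦ aa, extended to words
(the extra letter c is left untouched; it is never produced). -/
def sigmaw : List Letter → List Letter :=
  fun w => w.flatMap fun x => match x with
    | .a => [.a, .b]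
    | .b => [.a, .a]
    | .c => [.c]

/-- A_m = σ^m(a). -/
def A (m : ℕ) : List Letter := sigmaw^[m] [.a]

/-- B_m = σ^m(b). -/
def B (m : ℕ) : List Letter := sigmaw^[m] [.b]

/-- δ_m, the last letter of A_m. -/
def delta (m : ℕ) : Letter := (A m).getLastD .a

/-- The period-doubling sequence D, as a function giving its (n+1)-st letter
(0-indexed); it is the fixed point of σ beginning with a, and A_{n+1} is a
prefix of it of length 2^{n+1} > n. -/
def D (n : ℕ) : Letter := (A (n + 1)).getD n .a

/-- The finite segment D[i .. i+len−1] of the period-doubling sequence,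
with 1-based starting position i. -/
def Dseg (i len : ℕ) : List Letter := (List.range len).map fun k => D (i - 1 + k)

/-- u occurs in the finite word w at (1-based) position i. -/
def OccursAt {α : Type*} (u w : List α) (i : ℕ) : Prop :=
  1 ≤ i ∧ i - 1 + u.length ≤ w.length ∧ (w.drop (i - 1)).take u.length = u

/-- u is a factor of the finite word w. -/
def IsFactor {α : Type*} (u w : List α) : Prop := ∃ i, OccursAt u w i

/-- u occurs in the period-doubling sequence D at (1-based) position i. -/
def DOccursAt (u : List Letter) (i : ℕ) : Prop := 1 ≤ i ∧ Dseg i u.length = u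

/-- u is a factor of the period-doubling sequence D. -/
def FactorD (u : List Letter) : Prop := ∃ i, DOccursAt u i

/-- L(u,p): the starting position of the p-th occurrence (p ≥ 1) of u in D. -/
noncomputable def L (u : List Letter) (p : ℕ) : ℕ := Nat.nth (DOccursAt u) (p - 1)

/-- r_p(u): the p-th return word of u (p ≥ 1), i.e. D[L(u,p) .. L(u,p+1)−1];
r_0(u) is the prefix of D preceding the first occurrence of u. -/
noncomputable def r (u : List Letter) (p : ℕ) : List Letter :=
  if p = 0 then Dseg 1 (L u 1 - 1) else Dseg (L u p) (L u (p + 1) - L u p)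

/-- The morphism τ₁ : a ↦ a, b ↦ bb, extended to words. -/
def tau1 : List Letter → List Letter :=
  fun w => w.flatMap fun x => match x with
    | .a => [.a]
    | .b => [.b, .b]
    | .c => [.c]

/-- The morphism τ₂ : a ↦ ab, b ↦ acac, extended to words. -/
def tau2 : List Letter → List Letter :=
  fun w => w.flatMap fun x => match x with
    | .a => [.a, .b]
    | .b => [.a, .c, .a, .c]
    | .c => [.c]

/-- Θ₁[p], the p-th letter (p ≥ 1) of Θ₁ = τ₁(D): since |τ₁(w)| ≥ |w|, the p-th
letter of Θ₁ is the p-th letter of the image of the length-p prefix of D. -/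
def Theta1 (p : ℕ) : Letter := (tau1 (Dseg 1 p)).getD (p - 1) .a

/-- Θ₂[p], the p-th letter (p ≥ 1) of Θ₂ = τ₂(D). -/
def Theta2 (p : ℕ) : Letter := (tau2 (Dseg 1 p)).getD (p - 1) .a

/-- The envelope word E_{1,m} = A_m with its last letter δ_m deleted. -/
def E1 (m : ℕ) : List Letter := (A m).dropLast

/-- The envelope word E_{2,m} = B_m B_{m−1} with its last letter δ_m deleted. -/
def E2 (m : ℕ) : List Letter := (B m ++ B (m - 1)).dropLast

/-- Enumeration of the envelope words in the order
E_{1,1} ⊏ E_{2,1} ⊏ E_{1,2} ⊏ E_{2,2} ⊏ …. -/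
def Eword (k : ℕ) : List Letter := if k % 2 = 0 then E1 (k / 2 + 1) else E2 (k / 2 + 1)

/-- Env(u): the ⊏-least envelope word having u as a factor. -/
noncomputable def Env (u : List Letter) : List Letter :=
  Eword (sInf {k | IsFactor u (Eword k)})

/-- The letterwise complement exchanging a and b. -/
def comp : Letter → Letter
  | .a => .b
  | .b => .a
  | .c => .c

lemma sigmaw_append (x y : List Letter) : sigmaw (x ++ y) = sigmaw x ++ sigmaw y := by
  simp [sigmaw]

lemma iter_append (m : ℕ) (x y : List Letter) :
    sigmaw^[m] (x ++ y) = sigmaw^[m] x ++ sigmaw^[m] y := by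
  induction m generalizing x y with
  | zero => simp
  | succ k ih =>
    simp only [Function.iterate_succ_apply, sigmaw_append]
    rw [ih]

lemma A_succ (m : ℕ) : A (m + 1) = A m ++ B m := by
  show sigmaw^[m+1] [.a] = _
  rw [Function.iterate_succ_apply]
  show sigmaw^[m] ([.a] ++ [.b]) = _
  rw [iter_append]; rfl

lemma B_succ (m : ℕ) : B (m + 1) = A m ++ A m := by
  show sigmaw^[m+1] [.b] = _
  rw [Function.iterate_succ_apply]
  show sigmaw^[m] ([.a] ++ [.a]) = _
  rw [iter_append]; rfl

lemma lenAB (m : ℕ) : (A m).length = 2 ^ m ∧ (B m).length = 2 ^ m := by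
  induction m with
  | zero => simp [A, B]
  | succ k ih =>
    rw [A_succ, B_succ]
    simp [List.length_append, ih.1, ih.2, pow_succ]; omega

lemma lenA (m : ℕ) : (A m).length = 2 ^ m := (lenAB m).1
lemma lenB (m : ℕ) : (B m).length = 2 ^ m := (lenAB m).2

lemma AB_struct (m : ℕ) : ∃ w : List Letter,
    (A m = w ++ [.a] ∧ B m = w ++ [.b]) ∨ (A m = w ++ [.b] ∧ B m = w ++ [.a]) := by
  induction m with
  | zero => exact ⟨[], Or.inl ⟨rfl, rfl⟩⟩
  | succ k ih =>
    obtain ⟨w, h | h⟩ := ih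
    · exact ⟨A k ++ w, Or.inr ⟨by rw [A_succ, h.2, List.append_assoc],
        by rw [B_succ, h.1]; simp⟩⟩
    · exact ⟨A k ++ w, Or.inl ⟨by rw [A_succ, h.2, List.append_assoc],
        by rw [B_succ, h.1]; simp⟩⟩

lemma odd_count (m : ℕ) : Odd ((A (m + 1)).count .b) := by
  obtain ⟨w, h | h⟩ := AB_struct m <;>
  · rw [A_succ, List.count_append, h.1, h.2, Nat.odd_iff]
    simp [List.count_append]
    omega

lemma count_comm_aux (x : Letter) : ∀ (n : ℕ) (p q : List Letter), p.length + q.length ≤ n →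
    p.length ≤ q.length → p ++ q = q ++ p →
    p.count x * q.length = q.count x * p.length := by
  intro n
  induction n with
  | zero => intro p q h _ _; simp at h; simp [h.1]
  | succ n ih =>
    intro p q hn hle h
    rcases eq_or_ne p [] with rfl | hp
    · simp
    · set r := q.drop p.length with hr
      have hq : q = p ++ r := by
        have h1 : p = q.take p.length := by
          have h2 := congrArg (List.take p.length) h
          simpa [List.take_append, Nat.sub_eq_zero_of_le hle] using h2
        conv_lhs => rw [← List.take_append_drop p.length q]
        rw [← h1, ← hr]
      have hcomm : p ++ r = r ++ p := by
        have : p ++ (p ++ r) = (p ++ r) ++ p := by rw [← hq]; exact h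
        simpa [List.append_assoc] using this
      have hlen : p.length + r.length ≤ n := by
        have hp' : 0 < p.length := List.length_pos_iff.mpr hp
        have : q.length = p.length + r.length := by rw [hq]; simp
        omega
      by_cases hle2 : p.length ≤ r.length
      · have key := ih p r hlen hle2 hcomm
        have hql : q.length = p.length + r.length := by rw [hq]; simp
        have hqc : q.count x = p.count x + r.count x := by rw [hq]; simp [List.count_append]
        rw [hql, hqc, Nat.mul_add, Nat.add_mul, key]
      · have key := ih r p (by omega) (by omega) hcomm.symm
        have hql : q.length = p.length + r.length := by rw [hq]; simp
        have hqc : q.count x = p.count x + r.count x := by rw [hq]; simp [List.count_append]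
        rw [hql, hqc, Nat.mul_add, Nat.add_mul, ← key]

lemma count_comm (x : Letter) (p q : List Letter) (h : p ++ q = q ++ p) :
    p.count x * q.length = q.count x * p.length := by
  by_cases hle : p.length ≤ q.length
  · exact count_comm_aux x (p.length + q.length) p q le_rfl hle h
  · exact (count_comm_aux x (q.length + p.length) q p le_rfl (by omega) h.symm).symm

lemma no_interior (m j : ℕ) (h0 : 0 < j) (h1 : j < 2 ^ m)
    (hseg : (A m).drop j ++ (A m).take j = A m) : False := by
  rcases m with _ | k
  · simp at h1; omega
  have hc : (A (k+1)).take j ++ (A (k+1)).drop j = (A (k+1)).drop j ++ (A (k+1)).take j := by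
    rw [List.take_append_drop, hseg]
  have key := count_comm .b _ _ hc
  have hlt : j ≤ (A (k+1)).length := by rw [lenA]; omega
  have l1 : ((A (k+1)).take j).length = j := by simp [List.length_take]; omega
  have l2 : ((A (k+1)).drop j).length = 2 ^ (k+1) - j := by simp [List.length_drop, lenA]
  rw [l1, l2] at key
  set cp := ((A (k+1)).take j).count .b with hcp
  set cq := ((A (k+1)).drop j).count .b with hcq
  have hsum : cp + cq = (A (k+1)).count .b := by
    rw [hcp, hcq, ← List.count_append, List.take_append_drop]
  set cA := (A (k+1)).count .b
  have hodd := odd_count k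
  have h2 : cp * (2 ^ (k+1) - j) + cp * j = cp * 2 ^ (k+1) := by
    rw [← Nat.mul_add]; congr 1; omega
  have h3 : cA * j = cp * 2 ^ (k+1) := by
    rw [← hsum, Nat.add_mul, ← h2, key]; ring
  have hdvd : 2 ^ (k+1) ∣ j * cA := by
    rw [mul_comm, h3]; exact Dvd.intro_left cp rfl
  have hcop : Nat.Coprime (2 ^ (k+1)) cA := by
    apply Nat.Coprime.pow_left
    exact Nat.coprime_two_left.mpr hodd
  have := Nat.le_of_dvd h0 (hcop.dvd_of_dvd_mul_right hdvd)
  omega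

lemma no_interior2 (m j : ℕ) (h0 : 0 < j) (h1 : j < 2 ^ m)
    (hseg : (B m).drop j ++ (A m).take j = A m) : False := by
  obtain ⟨w, hw⟩ := AB_struct m
  have hwlen : w.length + 1 = 2 ^ m := by
    rcases hw with ⟨ha, _⟩ | ⟨ha, _⟩ <;> (have h := lenA m; rw [ha] at h; simpa using h)
  have hj : j ≤ w.length := by omega
  have hc1 : ((B m).drop j).count .b + ((A m).take j).count .b = (A m).count .b := by
    conv_rhs => rw [← hseg]
    rw [List.count_append]
  have hc2 : ((A m).take j).count .b + ((A m).drop j).count .b = (A m).count .b := by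
    conv_rhs => rw [← List.take_append_drop j (A m)]
    rw [List.count_append]
  have heq : ((B m).drop j).count .b = ((A m).drop j).count .b := by omega
  rcases hw with ⟨ha, hb⟩ | ⟨ha, hb⟩ <;>
    rw [ha, hb] at heq <;>
    simp [List.drop_append, Nat.sub_eq_zero_of_le hj, List.count_append] at heq

lemma segGen (X Y : List Letter) (n j : ℕ) (hx : X.length = n) (hj : j ≤ n) :
    ((X ++ Y).drop j).take n = X.drop j ++ Y.take j := by
  rw [List.drop_append, Nat.sub_eq_zero_of_le (by omega), List.drop_zero,
    List.take_append, List.take_of_length_le (by simp [hx]),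
    List.length_drop, hx]
  congr 2
  omega

lemma B_ne_A (m : ℕ) : B m ≠ A m := by
  obtain ⟨w, hw | hw⟩ := AB_struct m <;> rw [hw.1, hw.2] <;> intro h <;> simp at h

lemma take_BA (m j : ℕ) (hj : j < 2 ^ m) : (B m).take j = (A m).take j := by
  obtain ⟨w, hw⟩ := AB_struct m
  have hwlen : w.length + 1 = 2 ^ m := by
    rcases hw with ⟨ha, _⟩ | ⟨ha, _⟩ <;> (have h := lenA m; rw [ha] at h; simpa using h)
  rcases hw with ⟨ha, hb⟩ | ⟨ha, hb⟩ <;> rw [ha, hb] <;>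
    rw [List.take_append, List.take_append,
      Nat.sub_eq_zero_of_le (by omega)] <;> simp


/-- For every m ≥ 0, A_m occurs exactly twice in A_m A_m, at positions 1
and 2^m + 1, and exactly twice in A_m B_m A_m, at positions 1 and 2^{m+1} + 1. -/
theorem Am_occurrences (m : ℕ) :
    (∀ i, OccursAt (A m) (A m ++ A m) i ↔ i = 1 ∨ i = 2 ^ m + 1) ∧
    (∀ i, OccursAt (A m) (A m ++ B m ++ A m) i ↔ i = 1 ∨ i = 2 ^ (m + 1) + 1) := by
  have hlA := lenA m
  have hlB := lenB m
  constructor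
  · intro i
    constructor
    · rintro ⟨hi1, hi2, hseg⟩
      rw [hlA] at hseg
      simp only [List.length_append, hlA] at hi2
      set j := i - 1 with hj
      have hjn : j ≤ 2 ^ m := by omega
      rcases eq_or_ne j 0 with hj0 | hj0
      · left; omega
      rcases eq_or_ne j (2 ^ m) with hje | hje
      · right; omega
      exfalso
      rw [segGen (A m) (A m) (2 ^ m) j hlA hjn] at hseg
      exact no_interior m j (by omega) (by omega) hseg
    · rintro (rfl | rfl)
      · exact ⟨le_refl 1, by simp [hlA], by simp [List.take_left]⟩
      · refine ⟨by omega, by simp [hlA], ?_⟩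
        have h1 : (2 ^ m + 1 - 1) = (A m).length := by omega
        rw [h1, List.drop_left, List.take_length]
  · intro i
    constructor
    · rintro ⟨hi1, hi2, hseg⟩
      rw [hlA] at hseg
      simp only [List.length_append, hlA, hlB] at hi2
      set j := i - 1 with hj
      have hjn : j ≤ 2 ^ m + 2 ^ m := by omega
      rcases le_or_gt j (2 ^ m) with hle | hlt
      · -- segment inside A ++ B
        have hseg2 : (A m).drop j ++ (B m).take j = A m := by
          have e : ((A m ++ B m ++ A m).drop j).take (2 ^ m)
              = (A m).drop j ++ (B m).take j := by
            rw [List.append_assoc, segGen (A m) (B m ++ A m) (2 ^ m) j hlA hle,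
              List.take_append, Nat.sub_eq_zero_of_le (hlB ▸ hle)]
            simp
          exact e.symm.trans hseg
        rcases eq_or_ne j 0 with hj0 | hj0
        · left; omega
        rcases eq_or_ne j (2 ^ m) with hje | hje
        · exfalso
          rw [hje, ← hlA, List.drop_length, List.nil_append] at hseg2
          rw [show (A m).length = (B m).length by rw [hlA, hlB], List.take_length] at hseg2
          exact B_ne_A m hseg2
        · exfalso
          rw [take_BA m j (by omega)] at hseg2
          exact no_interior m j (by omega) (by omega) hseg2
      · -- segment inside B ++ A
        set j' := j - 2 ^ m with hj'
        have hdrop : (A m ++ B m ++ A m).drop j = (B m ++ A m).drop j' := by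
          rw [List.append_assoc, List.drop_append,
            List.drop_eq_nil_of_le (by omega), hlA, List.nil_append]
        rw [hdrop, segGen (B m) (A m) (2 ^ m) j' hlB (by omega)] at hseg
        rcases eq_or_ne j' (2 ^ m) with hje | hje
        · right
          rw [pow_succ]
          omega
        · exfalso
          exact no_interior2 m j' (by omega) (by omega) hseg
    · rintro (rfl | rfl)
      · refine ⟨le_refl 1, by simp only [List.length_append, hlA, hlB]; omega, ?_⟩
        simp only [show (1:ℕ) - 1 = 0 from rfl, List.drop_zero, List.append_assoc]
        exact List.take_left
      · refine ⟨by omega, by simp only [List.length_append, hlA, hlB, pow_succ]; omega, ?_⟩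
        have h1 : (2 ^ (m + 1) + 1 - 1) = (A m ++ B m).length := by
          simp only [List.length_append, hlA, hlB, pow_succ]; omega
        rw [h1, List.drop_left, List.take_length]
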